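/- Let G be a nontrivial finite abelian group. The following are equivalent: (1) G is not cyclic; (2) G contains a subgroup isomorphic to C_m × C_m for some integer m ≥ 2 (the square of a nontrivial cyclic group); (3) the Radon transform is injective on G. -/

import Mathlib

open Finset Subgroup

private lemma pow_mod_of_pow_eq_one {G : Type*} [Monoid G] {c : G} {n : ℕ} (hc : c ^ n = 1)
    (k : ℕ) : c ^ (k % n) = c ^ k := by
  conv_rhs => rw [← Nat.mod_add_div k n]
  rw [pow_add, pow_mul, hc, one_pow, mul_one]

private def torsionHom {G : Type*} [Monoid G] {n : ℕ} [NeZero n] (c : G) (hc : c ^ n = 1) :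
    Multiplicative (ZMod n) →* G where
  toFun t := c ^ (Multiplicative.toAdd t).val
  map_one' := by
    show c ^ (0 : ZMod n).val = 1
    simp
  map_mul' a b := by
    show c ^ (Multiplicative.toAdd a + Multiplicative.toAdd b).val = _
    rw [ZMod.val_add, pow_mod_of_pow_eq_one hc, pow_add]

private lemma torsionHom_apply {G : Type*} [Monoid G] {n : ℕ} [NeZero n] (c : G)
    (hc : c ^ n = 1) (t : ZMod n) :
    torsionHom c hc (Multiplicative.ofAdd t) = c ^ t.val := rfl

private lemma exists_prime_embedding {G : Type*} [CommGroup G] [Fintype G]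
    (h : ¬ IsCyclic G) :
    ∃ p : ℕ, p.Prime ∧ ∃ ψ : Multiplicative (ZMod p × ZMod p) →* G, Function.Injective ψ := by
  classical
  -- there is some n with more than n solutions of x^n = 1
  have h1 : ∃ n : ℕ, 0 < n ∧ n < #{a : G | a ^ n = 1} := by
    by_contra hc
    push_neg at hc
    exact h (isCyclic_of_card_pow_eq_one_le fun n hn => hc n hn)
  -- take the minimal such n
  let n := Nat.find h1
  obtain ⟨hn0, hncard⟩ : 0 < n ∧ n < #{a : G | a ^ n = 1} := Nat.find_spec h1
  have hmin : ∀ m, m < n → ¬(0 < m ∧ m < #{a : G | a ^ m = 1}) := fun m hm => Nat.find_min h1 hm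
  have hn1 : n ≠ 1 := by
    intro hn1
    rw [hn1] at hncard
    have : #{a : G | a ^ 1 = 1} ≤ 1 := by
      apply Finset.card_le_one.mpr
      intro a ha b hb
      simp only [mem_filter, pow_one] at ha hb
      rw [ha.2, hb.2]
    omega
  -- p = least prime factor of n, m = n / p
  set p := n.minFac with hp_def
  have hp : p.Prime := Nat.minFac_prime hn1
  haveI : Fact p.Prime := ⟨hp⟩
  have hpdvd : p ∣ n := Nat.minFac_dvd n
  set m := n / p with hm_def
  have hnm : n = p * m := (Nat.div_mul_cancel hpdvd).symm.trans (by ring)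
  have hm0 : 0 < m := Nat.div_pos (Nat.minFac_le hn0) hp.pos
  have hmlt : m < n := Nat.div_lt_self hn0 hp.one_lt
  have hmcard : #{a : G | a ^ m = 1} ≤ m := by
    by_contra hc
    exact hmin m hmlt ⟨hm0, by omega⟩
  -- counting: # {a^n = 1} ≤ m * #{a^p = 1}
  have hcount : #{a : G | a ^ n = 1} ≤ m * #{a : G | a ^ p = 1} := by
    apply Finset.card_le_mul_card_image_of_maps_to (f := fun x : G => x ^ m)
    · intro a ha
      simp only [mem_filter, mem_univ, true_and] at ha ⊢
      rw [← pow_mul, mul_comm, ← hnm, ha]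
    · intro b _
      rcases Finset.eq_empty_or_nonempty {a ∈ {a : G | a ^ n = 1} | a ^ m = b} with he | ⟨a₀, ha₀⟩
      · rw [he]; simp [hm0.le]
      · calc #{a ∈ {a : G | a ^ n = 1} | a ^ m = b} ≤ #{a : G | a ^ m = 1} := by
              apply Finset.card_le_card_of_injOn (fun a => a * a₀⁻¹)
              · intro a ha
                simp only [Finset.mem_coe, mem_filter, mem_univ, true_and] at ha ha₀ ⊢
                rw [mul_pow, ha.2, inv_pow, ha₀.2, mul_inv_cancel]
              · intro a _ b _ hab
                exact mul_right_cancel hab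
            _ ≤ m := hmcard
  have hpcard : p < #{a : G | a ^ p = 1} := by
    have h3 : m * p < m * #{a : G | a ^ p = 1} := by
      calc m * p = p * m := mul_comm m p
      _ = n := hnm.symm
      _ < #{a : G | a ^ n = 1} := hncard
      _ ≤ m * #{a : G | a ^ p = 1} := hcount
    exact Nat.lt_of_mul_lt_mul_left h3
  -- pick a of order p
  obtain ⟨a, haT, ha1⟩ :=
    Finset.exists_mem_ne (s := {a : G | a ^ p = 1}) (by have := hp.two_le; omega) 1
  simp only [mem_filter, mem_univ, true_and] at haT
  have haord : orderOf a = p := orderOf_eq_prime haT ha1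
  -- pick b with b^p = 1 outside ⟨a⟩
  obtain ⟨b, hbT, hbA⟩ : ∃ b : G, b ^ p = 1 ∧ b ∉ zpowers a := by
    by_contra hc
    push_neg at hc
    have hsub : ({a : G | a ^ p = 1} : Finset G) ⊆ Set.toFinset (zpowers a : Set G) := by
      intro x hx
      rw [Set.mem_toFinset]
      exact hc x (by simpa using hx)
    have hcard := Finset.card_le_card hsub
    rw [Set.toFinset_card] at hcard
    have hcz : Fintype.card (zpowers a : Set G) = p := by
      rw [← Nat.card_eq_fintype_card]
      simpa [haord] using (Nat.card_zpowers a)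
    omega
  have hb1 : b ≠ 1 := by
    rintro rfl
    exact hbA (Subgroup.one_mem _)
  have hbord : orderOf b = p := orderOf_eq_prime hbT hb1
  haveI : NeZero p := ⟨hp.ne_zero⟩
  -- the embedding
  refine ⟨p, hp, ((torsionHom a haT).comp
      (AddMonoidHom.fst (ZMod p) (ZMod p)).toMultiplicative) *
      ((torsionHom b hbT).comp (AddMonoidHom.snd (ZMod p) (ZMod p)).toMultiplicative), ?_⟩
  rw [injective_iff_map_eq_one]
  intro x hx
  set i := (Multiplicative.toAdd x).1 with hi_def
  set j := (Multiplicative.toAdd x).2 with hj_def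
  have hx' : a ^ i.val * b ^ j.val = 1 := hx
  -- first show j = 0
  have hj : j = 0 := by
    by_contra hj
    apply hbA
    -- b ^ j.val ∈ zpowers a
    have hbj : b ^ j.val ∈ zpowers a := by
      have : b ^ j.val = (a ^ i.val)⁻¹ := by
        rw [eq_inv_iff_mul_eq_one, mul_comm]
        exact hx'
      rw [this]
      exact Subgroup.inv_mem _ (Subgroup.npow_mem_zpowers _ _)
    -- b is a power of b ^ j.val
    have hk : ∃ k : ZMod p, k * j = 1 := ⟨j⁻¹, inv_mul_cancel₀ hj⟩
    obtain ⟨k, hk⟩ := hk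
    have : b = (b ^ j.val) ^ k.val := by
      rw [← pow_mul, mul_comm j.val k.val, ← pow_mod_of_pow_eq_one hbT, ← ZMod.val_mul, hk,
        ZMod.val_one, pow_one]
    rw [this]
    exact Subgroup.pow_mem _ hbj _
  rw [hj] at hx'
  simp only [ZMod.val_zero, pow_zero, mul_one] at hx'
  have hi : i = 0 := by
    have hdvd : p ∣ i.val := by
      have hd := orderOf_dvd_of_pow_eq_one hx'
      rwa [haord] at hd
    have hval : i.val = 0 := Nat.eq_zero_of_dvd_of_lt hdvd (ZMod.val_lt i)
    exact (ZMod.val_eq_zero i).mp hval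
  have hz : Multiplicative.toAdd x = 0 := Prod.ext hi hj
  exact Multiplicative.toAdd.injective (by simpa using hz)


private lemma sum_monoidHom_eq_zero {M : Type*} [Group M] [Fintype M] (ψ : M →* ℂ)
    (hψ : ψ ≠ 1) : ∑ s : M, ψ s = 0 := by
  obtain ⟨s, hs⟩ : ∃ s, ψ s ≠ 1 := by
    by_contra h
    push_neg at h
    exact hψ (MonoidHom.ext fun x => (h x).trans rfl)
  have h1 : ψ s * ∑ x : M, ψ x = ∑ x : M, ψ x := by
    rw [Finset.mul_sum]
    simp_rw [← map_mul]
    exact Fintype.sum_bijective (s * ·) (Group.mulLeft_bijective s) _ _ fun x => rfl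
  have h2 : (ψ s - 1) * ∑ x : M, ψ x = 0 := by
    rw [sub_mul, one_mul, h1, sub_self]
  rcases mul_eq_zero.mp h2 with h | h
  · exact absurd (sub_eq_zero.mp h) hs
  · exact h

private lemma exists_injective_char {G : Type*} [CommGroup G] [Fintype G] (h : IsCyclic G) :
    ∃ χ : G →* ℂ, Function.Injective χ := by
  have hN : (Nat.card G) ≠ 0 := Nat.card_pos.ne'
  haveI : NeZero (Nat.card G) := ⟨hN⟩
  set ζ := Complex.exp (2 * Real.pi * Complex.I / (Nat.card G)) with hζdef
  have hζ : IsPrimitiveRoot ζ (Nat.card G) := Complex.isPrimitiveRoot_exp _ hN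
  have hζN : ζ ^ (Nat.card G) = 1 := hζ.pow_eq_one
  let e := zmodCyclicMulEquiv h
  refine ⟨((torsionHom ζ hζN).comp e.symm.toMonoidHom), ?_⟩
  intro x y hxy
  have h1 : (Multiplicative.toAdd (e.symm x)).val = (Multiplicative.toAdd (e.symm y)).val :=
    hζ.pow_inj (ZMod.val_lt _) (ZMod.val_lt _) hxy
  have h2 := ZMod.val_injective _ h1
  exact e.symm.injective (Multiplicative.toAdd.injective h2)


/-- The Radon transform of `f` at `(x, γ)`: the sum of `f` over the geodesic
determined by the homomorphism `γ : C_n → G`, translated by `x`. -/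
noncomputable def radonSum {G : Type*} [Group G] {n : ℕ} [NeZero n]
    (f : G → ℂ) (γ : Multiplicative (ZMod n) →* G) (x : G) : ℂ :=
  ∑ t : ZMod n, f (x * γ (Multiplicative.ofAdd t))

/-- All Radon transforms of `f` (over geodesics of all lengths `n ≥ 2`) vanish. -/
def RadonNull (G : Type*) [Group G] (f : G → ℂ) : Prop :=
  ∀ (n : ℕ) (hn : 2 ≤ n) (γ : Multiplicative (ZMod n) →* G), γ ≠ 1 → ∀ x : G,
    haveI : NeZero n := ⟨by omega⟩
    radonSum f γ x = 0

/-- The Radon transform is injective on `G`. -/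
def RadonInjective (G : Type*) [Group G] : Prop :=
  ∀ f : G → ℂ, RadonNull G f → f = 0

-- direction: exists embedding → Radon injective
private lemma radonInjective_of_embedding {G : Type*} [CommGroup G] [Fintype G] (p : ℕ)
    (hp : p.Prime) (ψ : Multiplicative (ZMod p × ZMod p) →* G)
    (hψ : Function.Injective ψ) : RadonInjective G := by
  haveI : Fact p.Prime := ⟨hp⟩
  haveI : NeZero p := ⟨hp.ne_zero⟩
  intro f hf
  funext x
  show f x = 0
  -- notation
  set g : ZMod p → ZMod p → ℂ := fun u v => f (x * ψ (Multiplicative.ofAdd (u, v))) with hg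
  -- row sums vanish
  have hrow : ∀ u : ZMod p, ∑ v : ZMod p, g u v = 0 := by
    intro u
    have hL : (ψ.comp (AddMonoidHom.inr (ZMod p) (ZMod p)).toMultiplicative) ≠ 1 := by
      intro hL1
      have h1 : ψ (Multiplicative.ofAdd ((0 : ZMod p), (1 : ZMod p))) = 1 := by
        have := congrArg (fun F => F (Multiplicative.ofAdd (1 : ZMod p))) hL1
        simpa using this
      have := hψ (h1.trans (map_one ψ).symm)
      have := congrArg (fun z => (Multiplicative.toAdd z).2) this
      simp at this
    have h0 := hf p hp.two_le _ hL (x * ψ (Multiplicative.ofAdd (u, (0 : ZMod p))))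
    rw [radonSum] at h0
    rw [← h0]
    apply Finset.sum_congr rfl
    intro v _
    show f (x * ψ (Multiplicative.ofAdd (u, v))) =
      f (x * ψ (Multiplicative.ofAdd (u, (0 : ZMod p))) *
        ψ (Multiplicative.ofAdd ((0 : ZMod p), v)))
    rw [mul_assoc, ← map_mul, ← ofAdd_add]
    simp
  -- line sums vanish
  have hline : ∀ a : ZMod p, ∑ t : ZMod p, g t (a * t) = 0 := by
    intro a
    set L : Multiplicative (ZMod p) →* G :=
      ψ.comp ((AddMonoidHom.id (ZMod p)).prod (AddMonoidHom.mulLeft a)).toMultiplicative with hLdef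
    have hL : L ≠ 1 := by
      intro hL1
      have h1 : ψ (Multiplicative.ofAdd ((1 : ZMod p), a * 1)) = 1 := by
        have := congrArg (fun F => F (Multiplicative.ofAdd (1 : ZMod p))) hL1
        simpa [hLdef] using this
      have := hψ (h1.trans (map_one ψ).symm)
      have := congrArg (fun z => (Multiplicative.toAdd z).1) this
      simp at this
    have h0 := hf p hp.two_le L hL x
    rw [radonSum] at h0
    rw [← h0]
    apply Finset.sum_congr rfl
    intro t _
    simp only [hg, hLdef]
    rfl
  -- combine
  have hzero : (0 : ℂ) = ∑ t : ZMod p, ∑ a : ZMod p, g t (a * t) := by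
    rw [Finset.sum_comm]
    rw [eq_comm, Finset.sum_eq_zero]
    intro a _
    exact hline a
  have hmain : ∑ t : ZMod p, ∑ a : ZMod p, g t (a * t) = (p : ℂ) * g 0 0 := by
    rw [Finset.sum_eq_single_of_mem (0 : ZMod p) (Finset.mem_univ _)]
    · simp only [mul_zero]
      rw [Finset.sum_const, Finset.card_univ, ZMod.card, nsmul_eq_mul]
    · intro t _ ht
      have : ∑ a : ZMod p, g t (a * t) = ∑ v : ZMod p, g t v :=
        Fintype.sum_equiv (Equiv.mulRight₀ t ht) _ _ fun a => rfl
      rw [this]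
      exact hrow t
  have hfx : g 0 0 = f x := by
    simp only [hg]
    norm_num [Prod.mk_zero_zero]
  rw [hmain, hfx] at hzero
  have hp0 : (p : ℂ) ≠ 0 := Nat.cast_ne_zero.mpr hp.ne_zero
  exact (mul_eq_zero.mp hzero.symm).resolve_left hp0


private lemma not_radonInjective_of_isCyclic {G : Type*} [CommGroup G] [Fintype G]
    (h : IsCyclic G) : ¬ RadonInjective G := by
  obtain ⟨χ, hχ⟩ := exists_injective_char h
  intro hinj
  have hnull : RadonNull G χ := by
    intro n hn γ hγ x
    haveI : NeZero n := ⟨by omega⟩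
    have hcomp : χ.comp γ ≠ 1 := by
      intro h1
      apply hγ
      ext s
      have : χ (γ s) = 1 := by
        have := congrArg (fun F => F s) h1
        exact DFunLike.congr_fun h1 s
      exact hχ (this.trans (map_one χ).symm)
    have hsum : ∑ t : ZMod n, χ (γ (Multiplicative.ofAdd t)) = 0 := by
      have := sum_monoidHom_eq_zero (χ.comp γ) hcomp
      rw [← this]
      exact Fintype.sum_equiv Multiplicative.ofAdd _ _ fun t => rfl
    show radonSum (⇑χ) γ x = 0
    rw [radonSum]
    simp_rw [map_mul, ← Finset.mul_sum, hsum, mul_zero]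
  have : (⇑χ : G → ℂ) = 0 := hinj _ hnull
  have h1 : χ (1 : G) = 0 := by rw [this]; rfl
  rw [map_one] at h1
  exact one_ne_zero h1

theorem radon_abelian_tfae (G : Type*) [CommGroup G] [Fintype G] [Nontrivial G] :
    List.TFAE
      [¬ IsCyclic G,
       ∃ m : ℕ, 2 ≤ m ∧ ∃ H : Subgroup G, Nonempty (H ≃* Multiplicative (ZMod m × ZMod m)),
       RadonInjective G] := by
  tfae_have 1 → 2 := by
    intro h1
    obtain ⟨p, hp, ψ, hψ⟩ := exists_prime_embedding h1
    exact ⟨p, hp.two_le, ψ.range, ⟨(MonoidHom.ofInjective hψ).symm⟩⟩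
  tfae_have 2 → 1 := by
    rintro ⟨m, hm, H, ⟨e⟩⟩ hcyc
    haveI : NeZero m := ⟨by omega⟩
    haveI : IsCyclic H := Subgroup.isCyclic H
    haveI : IsCyclic (Multiplicative (ZMod m × ZMod m)) :=
      isCyclic_of_surjective e.toMonoidHom e.surjective
    obtain ⟨g, hg⟩ := IsCyclic.exists_generator (α := Multiplicative (ZMod m × ZMod m))
    have hcard : Nat.card (Multiplicative (ZMod m × ZMod m)) = m * m := by
      simp [Nat.card_eq_fintype_card, ZMod.card]
    have hord : orderOf g = m * m := by
      rw [orderOf_eq_card_of_forall_mem_zpowers hg, hcard]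
    have hgm : g ^ m = 1 := by
      have : (m : ℕ) • (Multiplicative.toAdd g) = 0 := by
        ext <;> simp [nsmul_eq_mul]
      have h2 : Multiplicative.toAdd (g ^ m) = 0 := by
        rw [toAdd_pow]
        exact this
      calc g ^ m = Multiplicative.ofAdd (Multiplicative.toAdd (g ^ m)) := rfl
      _ = Multiplicative.ofAdd 0 := by rw [h2]
      _ = 1 := rfl
    have hdvd : orderOf g ∣ m := orderOf_dvd_of_pow_eq_one hgm
    rw [hord] at hdvd
    have := Nat.le_of_dvd (by omega) hdvd
    nlinarith
  tfae_have 1 → 3 := by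
    intro h1
    obtain ⟨p, hp, ψ, hψ⟩ := exists_prime_embedding h1
    exact radonInjective_of_embedding p hp ψ hψ
  tfae_have 3 → 1 := by
    intro h3 hcyc
    exact not_radonInjective_of_isCyclic hcyc h3
  tfae_finish
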